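/- arXiv:1307.1182 — 3 statements merged into one kernel-verified Lean document; each statement's English description precedes it below -/
import Mathlib

section
/- Let (X, d) be a compact metric space, let f : X → X be a homeomorphism satisfying the specification property, and let p ∈ X be a fixed point of f. Then for all ε_1 > 0, ε_2 > 0 and every x ∈ X, there exist a natural number L and a point w ∈ X such that d(x, w) ≤ ε_2 and d(f^{-n}(f^{-L}(w)), p) ≤ ε_1 for all n ≥ 0. In other words, the set ⋃_{L ≥ 0} f^L({y ∈ X : d(f^{-n}(y), p) ≤ ε_1 for all n ≥ 0}) is dense in X for every ε_1 > 0. -/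
open Filter Topology

/-- The specification property for a homeomorphism `f` of a metric space. -/
def SpecProp {X : Type*} [MetricSpace X] (f : X ≃ₜ X) : Prop :=
  ∀ ε : ℝ, 0 < ε → ∃ N : ℕ, 0 < N ∧
    ∀ (k : ℕ) (m n : ℕ → ℤ) (xs : ℕ → X),
      (∀ j < k, m j ≤ n j) →
      (∀ i < k, ∀ j < k, i ≠ j →
        ∀ a ∈ Set.Icc (m i) (n i), ∀ b ∈ Set.Icc (m j) (n j), (N : ℤ) ≤ |a - b|) →
      ∃ x : X, ∀ j < k, ∀ i ∈ Set.Icc (m j) (n j),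
        dist ((f.toEquiv ^ i) x) ((f.toEquiv ^ i) (xs j)) ≤ ε

lemma continuous_toEquiv_zpow {X : Type*} [TopologicalSpace X] (f : X ≃ₜ X) (i : ℤ) :
    Continuous fun y => (f.toEquiv ^ i) y := by
  induction i using Int.induction_on with
  | zero => simpa using continuous_id'
  | succ n ih =>
      have h : ∀ y : X, (f.toEquiv ^ ((n : ℤ) + 1)) y = (f.toEquiv ^ (n : ℤ)) (f y) := by
        intro y
        rw [zpow_add_one]
        rfl
      simp only [h]
      exact ih.comp f.continuous
  | pred n ih =>
      have h : ∀ y : X, (f.toEquiv ^ (-(n : ℤ) - 1)) y = (f.toEquiv ^ (-(n : ℤ))) (f.symm y) := by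
        intro y
        rw [zpow_sub_one]
        rfl
      simp only [h]
      exact ih.comp f.symm.continuous

lemma zpow_fixed {X : Type*} [TopologicalSpace X] (f : X ≃ₜ X) (p : X) (hp : f p = p)
    (i : ℤ) : (f.toEquiv ^ i) p = p :=
  (Function.IsFixedPt.perm_zpow (by exact hp) i)

/-- if a homeomorphism of a compact metric space satisfies the specification
property and `p` is a fixed point, then the union over `L ≥ 0` of the `f^L`-images of the
local unstable set of `p` of size `ε₁` is dense: every point `x` is `ε₂`-approximated by
some such `w`. -/
theorem dense_unstable_set_of_fixedPoint {X : Type*} [MetricSpace X] [CompactSpace X]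
    (f : X ≃ₜ X) (hf : SpecProp f) (p : X) (hp : f p = p) :
    ∀ ε₁ ε₂ : ℝ, 0 < ε₁ → 0 < ε₂ → ∀ x : X,
      ∃ (L : ℕ) (w : X), dist x w ≤ ε₂ ∧
        ∀ n : ℕ, dist ((f.toEquiv ^ (-(n : ℤ))) ((f.toEquiv ^ (-(L : ℤ))) w)) p ≤ ε₁ := by
  intro ε₁ ε₂ hε₁ hε₂ x
  set ε : ℝ := min ε₁ ε₂ with hεdef
  have hε : 0 < ε := lt_min hε₁ hε₂
  have hε2 : 0 < ε / 2 := by positivity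
  obtain ⟨N, hN, hspec⟩ := hf (ε / 2) hε2
  -- for each T, find w_T close to x whose backward orbit on [-(T+N), -N] is ε/2-close to p
  have key : ∀ T : ℕ, ∃ w : X, dist w x ≤ ε / 2 ∧
      ∀ i ∈ Set.Icc (-(T + N : ℤ)) (-(N : ℤ)), dist ((f.toEquiv ^ i) w) p ≤ ε / 2 := by
    intro T
    obtain ⟨w, hw⟩ := hspec 2 (fun j => if j = 0 then -(T + N : ℤ) else 0)
      (fun j => if j = 0 then -(N : ℤ) else 0) (fun j => if j = 0 then p else x)
      (by
        intro j hj
        interval_cases j <;> norm_num)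
      (by
        intro i hi j hj hij a ha b hb
        interval_cases i <;> interval_cases j <;>
          norm_num [Set.mem_Icc] at ha hb ⊢ <;>
          rcases abs_cases (a - b) with ⟨h1, h2⟩ | ⟨h1, h2⟩ <;> omega)
    refine ⟨w, ?_, ?_⟩
    · have := hw 1 (by norm_num) 0 (by simp)
      simpa using this
    · intro i hi
      have := hw 0 (by norm_num) i (by simpa using hi)
      simpa [zpow_fixed f p hp] using this
  choose ws hws1 hws2 using key
  -- take a convergent subsequence
  obtain ⟨w, -, φ, hφ, hlim⟩ := isCompact_univ.tendsto_subseq (fun T => Set.mem_univ (ws T))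
  refine ⟨N, w, ?_, ?_⟩
  · have h1 : Tendsto (fun T => dist (ws (φ T)) x) atTop (𝓝 (dist w x)) :=
      (continuous_id.dist continuous_const).continuousAt.tendsto.comp hlim
    have h2 : dist w x ≤ ε / 2 :=
      le_of_tendsto h1 (Filter.Eventually.of_forall fun T => hws1 (φ T))
    rw [dist_comm]
    calc dist w x ≤ ε / 2 := h2
    _ ≤ ε₂ := by
        have : ε ≤ ε₂ := min_le_right _ _
        linarith
  · intro n
    have hcomp : ∀ y : X, (f.toEquiv ^ (-(n : ℤ))) ((f.toEquiv ^ (-(N : ℤ))) y)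
        = (f.toEquiv ^ (-(n : ℤ) + -(N : ℤ))) y := by
      intro y
      rw [zpow_add]
      rfl
    rw [hcomp]
    set i : ℤ := -(n : ℤ) + -(N : ℤ) with hidef
    -- for large T, ws (φ T) satisfies the estimate at index i
    have hbound : ∀ T : ℕ, n ≤ φ T → dist ((f.toEquiv ^ i) (ws (φ T))) p ≤ ε / 2 := by
      intro T hT
      apply hws2 (φ T)
      constructor
      · omega
      · omega
    have hev : ∀ᶠ T in atTop, dist ((f.toEquiv ^ i) (ws (φ T))) p ≤ ε / 2 := by
      have : ∀ᶠ T in atTop, n ≤ φ T :=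
        hφ.tendsto_atTop.eventually_ge_atTop n
      filter_upwards [this] with T hT using hbound T hT
    have hdlim : Tendsto (fun T => dist ((f.toEquiv ^ i) (ws (φ T))) p) atTop
        (𝓝 (dist ((f.toEquiv ^ i) w) p)) :=
      (((continuous_toEquiv_zpow f i).dist continuous_const).continuousAt.tendsto).comp hlim
    have := le_of_tendsto hdlim hev
    calc dist ((f.toEquiv ^ i) w) p ≤ ε / 2 := this
    _ ≤ ε₁ := by
        have : ε ≤ ε₁ := min_le_left _ _
        linarith
end

section
/- Let (X, d) be a compact metric space, let f : X → X be a homeomorphism satisfying the specification property, and let p ∈ X be a periodic point of f. Suppose there exists ε_1 > 0 such that every point y ∈ X with d(f^{-n}(y), f^{-n}(p)) ≤ ε_1 for all n ≥ 0 satisfies d(f^{-n}(y), f^{-n}(p)) → 0 as n → ∞ (i.e., the local unstable set of p of size ε_1 is contained in the unstable set of p). Then the unstable set W^u(p) = {y ∈ X : d(f^{-n}(y), f^{-n}(p)) → 0 as n → ∞} is dense in X. -/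
open Filter Topology

lemma continuous_zpow_toEquiv {X : Type*} [MetricSpace X] (f : X ≃ₜ X) (i : ℤ) :
    Continuous fun x => (f.toEquiv ^ i) x := by
  induction i using Int.induction_on with
  | zero => simpa using continuous_id'
  | succ n ih =>
      have h : ∀ x, (f.toEquiv ^ ((n : ℤ) + 1)) x = (f.toEquiv ^ (n : ℤ)) (f x) := by
        intro x
        rw [zpow_add_one, Equiv.Perm.mul_apply]
        rfl
      simp only [h]; exact ih.comp f.continuous
  | pred n ih =>
      have h : ∀ x, (f.toEquiv ^ (-(n : ℤ) - 1)) x = (f.toEquiv ^ (-(n : ℤ))) (f.symm x) := by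
        intro x
        rw [zpow_sub_one, Equiv.Perm.mul_apply]
        rfl
      simp only [h]; exact ih.comp f.symm.continuous

lemma zpow_add_apply_toEquiv {X : Type*} [MetricSpace X] (f : X ≃ₜ X) (a b : ℤ) (x : X) :
    (f.toEquiv ^ (a + b)) x = (f.toEquiv ^ a) ((f.toEquiv ^ b) x) := by
  rw [zpow_add, Equiv.Perm.mul_apply]

/-- if `f` satisfies the specification property, `p` is a periodic point, and
some local unstable set of `p` is contained in the unstable set of `p`, then the unstable
set `W^u(p) = {y : d(f^{-n} y, f^{-n} p) → 0}` is dense in `X`. -/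
theorem dense_unstable_manifold_of_periodic {X : Type*} [MetricSpace X] [CompactSpace X]
    (f : X ≃ₜ X) (hf : SpecProp f) (p : X)
    (hper : ∃ k : ℕ, 1 ≤ k ∧ (f.toEquiv ^ (k : ℤ)) p = p)
    (hloc : ∃ ε₁ : ℝ, 0 < ε₁ ∧ ∀ y : X,
      (∀ n : ℕ, dist ((f.toEquiv ^ (-(n : ℤ))) y) ((f.toEquiv ^ (-(n : ℤ))) p) ≤ ε₁) →
      Tendsto (fun n : ℕ => dist ((f.toEquiv ^ (-(n : ℤ))) y) ((f.toEquiv ^ (-(n : ℤ))) p))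
        atTop (nhds 0)) :
    Dense {y : X |
      Tendsto (fun n : ℕ => dist ((f.toEquiv ^ (-(n : ℤ))) y) ((f.toEquiv ^ (-(n : ℤ))) p))
        atTop (nhds 0)} := by
  obtain ⟨k, hk1, hkp⟩ := hper
  obtain ⟨ε₁, hε₁, hloc⟩ := hloc
  rw [Metric.dense_iff]
  intro z r hr
  set ε' : ℝ := min ε₁ (r / 2) with hε'def
  have hε' : 0 < ε' := lt_min hε₁ (by linarith)
  obtain ⟨N, hNpos, hspec⟩ := hf ε' hε'
  set N' : ℕ := k * N with hN'def
  have hNN' : N ≤ N' := Nat.le_mul_of_pos_left N (by omega)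
  -- periodic point facts
  have hppow : ∀ q : ℕ, (f.toEquiv ^ ((k : ℤ) * q)) p = p := by
    intro q
    induction q with
    | zero => simp
    | succ q ih =>
        have h1 : (k : ℤ) * (q + 1 : ℕ) = (k : ℤ) * (q : ℕ) + (k : ℤ) := by push_cast; ring
        rw [h1, zpow_add_apply_toEquiv, hkp, ih]
  have hpN' : (f.toEquiv ^ ((N' : ℕ) : ℤ)) p = p := by
    have h1 : ((N' : ℕ) : ℤ) = (k : ℤ) * (N : ℕ) := by rw [hN'def]; push_cast; ring
    rw [h1]; exact hppow N
  have hpN'neg : (f.toEquiv ^ (-((N' : ℕ) : ℤ))) p = p := by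
    conv_lhs => rw [← hpN', ← zpow_add_apply_toEquiv]
    simp
  clear_value N'
  clear hN'def hppow hpN' hkp hk1
  -- apply the specification property for each M
  have hsp : ∀ M : ℕ, ∃ x : X,
      (∀ i ∈ Set.Icc (-((N' : ℤ) + M)) (-(N' : ℤ)),
        dist ((f.toEquiv ^ i) x) ((f.toEquiv ^ i) p) ≤ ε') ∧ dist x z ≤ ε' := by
    intro M
    obtain ⟨x, hx⟩ := hspec 2
      (fun j => if j = 0 then -((N' : ℤ) + M) else 0)
      (fun j => if j = 0 then -(N' : ℤ) else 0)
      (fun j => if j = 0 then p else z)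
      (by
        intro j hj
        split <;> omega)
      (by
        intro i hi j hj hij a ha b hb
        have hkN : (N : ℤ) ≤ (N' : ℤ) := by exact_mod_cast hNN'
        have hcase : (i = 0 ∧ j = 1) ∨ (i = 1 ∧ j = 0) := by omega
        rcases hcase with ⟨hi0, hj1⟩ | ⟨hi1, hj0⟩
        · subst hi0; subst hj1
          norm_num [Set.mem_Icc] at ha hb
          rw [abs_of_nonpos (by omega)]
          omega
        · subst hi1; subst hj0
          norm_num [Set.mem_Icc] at ha hb
          rw [abs_of_nonneg (by omega)]
          omega)
    refine ⟨x, ?_, ?_⟩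
    · intro i hi
      have := hx 0 (by norm_num) i (by simpa using hi)
      simpa using this
    · have := hx 1 (by norm_num) 0 (by simp)
      simpa using this
  choose Y hY1 hY2 using hsp
  obtain ⟨y, -, φ, hφ, hyt⟩ := isCompact_univ.tendsto_subseq (x := Y) (fun M => Set.mem_univ _)
  -- dist y z ≤ ε'
  have hyz : dist y z ≤ ε' := by
    have hc : Tendsto (fun M => dist (Y (φ M)) z) atTop (nhds (dist y z)) :=
      (continuous_id.dist continuous_const).continuousAt.tendsto.comp hyt
    exact le_of_tendsto hc (Eventually.of_forall fun M => hY2 (φ M))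
  -- dist (f^{-(n+N')} y) (f^{-(n+N')} p) ≤ ε' for all n
  have hkey : ∀ n : ℕ, dist ((f.toEquiv ^ (-((n + N' : ℕ) : ℤ))) y)
      ((f.toEquiv ^ (-((n + N' : ℕ) : ℤ))) p) ≤ ε' := by
    intro n
    set i : ℤ := -((n + N' : ℕ) : ℤ) with hidef
    have hc : Tendsto (fun M => dist ((f.toEquiv ^ i) (Y (φ M))) ((f.toEquiv ^ i) p))
        atTop (nhds (dist ((f.toEquiv ^ i) y) ((f.toEquiv ^ i) p))) := by
      exact (((continuous_zpow_toEquiv f i).dist continuous_const).continuousAt.tendsto).comp hyt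
    refine le_of_tendsto hc ?_
    filter_upwards [eventually_ge_atTop n] with M hM
    have hφM : n ≤ φ M := le_trans hM (hφ.le_apply.trans (le_refl _))
    refine hY1 (φ M) i ?_
    constructor
    · push_cast [hidef]
      have : (n : ℤ) ≤ (φ M : ℤ) := by exact_mod_cast hφM
      linarith
    · push_cast [hidef]
      linarith [Int.natCast_nonneg n]
  -- the shifted point y' lies in the local unstable set of p
  set y' : X := (f.toEquiv ^ (-((N' : ℕ) : ℤ))) y with hy'def
  have hshift : ∀ n : ℕ, dist ((f.toEquiv ^ (-(n : ℤ))) y') ((f.toEquiv ^ (-(n : ℤ))) p)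
      = dist ((f.toEquiv ^ (-((n + N' : ℕ) : ℤ))) y) ((f.toEquiv ^ (-((n + N' : ℕ) : ℤ))) p) := by
    intro n
    have h1 : (-((n + N' : ℕ) : ℤ)) = (-(n : ℤ)) + (-((N' : ℕ) : ℤ)) := by push_cast; ring
    rw [h1, zpow_add_apply_toEquiv, zpow_add_apply_toEquiv, hpN'neg, ← hy'def]
  have hy'loc : ∀ n : ℕ, dist ((f.toEquiv ^ (-(n : ℤ))) y') ((f.toEquiv ^ (-(n : ℤ))) p) ≤ ε₁ := by
    intro n
    rw [hshift n]
    exact (hkey n).trans (min_le_left _ _)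
  have hy'tend := hloc y' hy'loc
  -- deduce that y itself lies in the unstable set
  have hmem : Tendsto (fun n : ℕ =>
      dist ((f.toEquiv ^ (-(n : ℤ))) y) ((f.toEquiv ^ (-(n : ℤ))) p)) atTop (nhds 0) := by
    rw [← tendsto_add_atTop_iff_nat N']
    have heq : (fun n : ℕ => dist ((f.toEquiv ^ (-((n + N' : ℕ) : ℤ))) y)
        ((f.toEquiv ^ (-((n + N' : ℕ) : ℤ))) p))
        = fun n : ℕ => dist ((f.toEquiv ^ (-(n : ℤ))) y') ((f.toEquiv ^ (-(n : ℤ))) p) := by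
      funext n; exact (hshift n).symm
    exact heq ▸ hy'tend
  refine ⟨y, ?_, hmem⟩
  rw [Metric.mem_ball]
  calc dist y z ≤ ε' := hyz
    _ ≤ r / 2 := min_le_right _ _
    _ < r := by linarith
end

section
/- Let (X, d) be a compact metric space, let f : X → X be a homeomorphism satisfying the specification property, and let q ∈ X be a periodic point of f. Suppose there exists ε_1 > 0 such that every point y ∈ X with d(f^{n}(y), f^{n}(q)) ≤ ε_1 for all n ≥ 0 satisfies d(f^{n}(y), f^{n}(q)) → 0 as n → ∞ (i.e., the local stable set of q of size ε_1 is contained in the stable set of q). Then the stable set W^s(q) = {y ∈ X : d(f^{n}(y), f^{n}(q)) → 0 as n → ∞} is dense in X. -/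
open Filter Topology

private lemma pow_add_apply' {X : Type*} (e : Equiv.Perm X) (a b : ℕ) (x : X) :
    (e ^ ((a + b : ℕ) : ℤ)) x = (e ^ (a : ℤ)) ((e ^ (b : ℤ)) x) := by
  push_cast
  rw [zpow_add]
  rfl

private lemma cont_pow' {X : Type*} [MetricSpace X] (f : X ≃ₜ X) (n : ℕ) :
    Continuous fun x : X => (f.toEquiv ^ (n : ℤ)) x := by
  induction n with
  | zero => simpa using continuous_id'
  | succ k ih =>
      have h : ∀ x : X, (f.toEquiv ^ ((k + 1 : ℕ) : ℤ)) x
          = (f.toEquiv ^ (k : ℤ)) (f.toEquiv x) := by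
        intro x
        have := pow_add_apply' f.toEquiv k 1 x
        simpa using this
      simp only [h]
      exact ih.comp f.continuous

private lemma periodic_mul' {X : Type*} (e : Equiv.Perm X) (q : X) (k : ℕ)
    (hkq : (e ^ (k : ℤ)) q = q) : ∀ m : ℕ, (e ^ ((m * k : ℕ) : ℤ)) q = q := by
  intro m
  induction m with
  | zero => simp
  | succ j ih =>
      have : ((j + 1) * k : ℕ) = (j * k) + k := by ring
      rw [this, pow_add_apply' e (j * k) k q, hkq, ih]

/-- if `f` satisfies the specification property, `q` is a periodic point, and
some local stable set of `q` is contained in the stable set of `q`, then the stable set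
`W^s(q) = {y : d(f^{n} y, f^{n} q) → 0}` is dense in `X`. -/
theorem dense_stable_manifold_of_periodic {X : Type*} [MetricSpace X] [CompactSpace X]
    (f : X ≃ₜ X) (hf : SpecProp f) (q : X)
    (hper : ∃ k : ℕ, 1 ≤ k ∧ (f.toEquiv ^ (k : ℤ)) q = q)
    (hloc : ∃ ε₁ : ℝ, 0 < ε₁ ∧ ∀ y : X,
      (∀ n : ℕ, dist ((f.toEquiv ^ (n : ℤ)) y) ((f.toEquiv ^ (n : ℤ)) q) ≤ ε₁) →
      Tendsto (fun n : ℕ => dist ((f.toEquiv ^ (n : ℤ)) y) ((f.toEquiv ^ (n : ℤ)) q))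
        atTop (nhds 0)) :
    Dense {y : X |
      Tendsto (fun n : ℕ => dist ((f.toEquiv ^ (n : ℤ)) y) ((f.toEquiv ^ (n : ℤ)) q))
        atTop (nhds 0)} := by
  obtain ⟨k, hk1, hkq⟩ := hper
  obtain ⟨ε₁, hε₁, hstab⟩ := hloc
  set e := f.toEquiv with he
  rw [Metric.dense_iff]
  intro x r hr
  set ε' : ℝ := min r ε₁ / 2 with hε'def
  have hε' : 0 < ε' := by positivity
  obtain ⟨N, hN, hspec⟩ := hf ε' hε'
  -- build approximating sequence via specification
  have H : ∀ t : ℕ, ∃ x' : X, dist x' x ≤ ε' ∧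
      ∀ i : ℤ, (N : ℤ) ≤ i → i ≤ (N : ℤ) + t → dist ((e ^ i) x') ((e ^ i) q) ≤ ε' := by
    intro t
    obtain ⟨x', hx'⟩ := hspec 2 (fun j => if j = 0 then 0 else (N : ℤ))
      (fun j => if j = 0 then 0 else (N : ℤ) + t) (fun j => if j = 0 then x else q)
      (by
        intro j hj
        by_cases h0 : j = 0
        · simp [h0]
        · simp only [if_neg h0]
          omega)
      (by
        intro i hi j hj hij a ha b hb
        rw [Set.mem_Icc] at ha hb
        rw [le_abs]
        by_cases h0 : i = 0
        · have hj0 : j ≠ 0 := fun h => hij (h0.trans h.symm)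
          simp only [h0, if_pos, if_neg hj0, ite_true] at ha hb
          omega
        · have hj0 : j = 0 := by omega
          simp only [if_neg h0, hj0, ite_true] at ha hb
          omega)
    refine ⟨x', ?_, ?_⟩
    · have := hx' 0 (by norm_num) 0 (by simp)
      simpa using this
    · intro i hiN hit
      have := hx' 1 (by norm_num) i (by simp [Set.mem_Icc, hiN, hit])
      simpa using this
  choose y hy1 hy2 using H
  -- take a convergent subsequence
  obtain ⟨a, -, φ, hφ, hconv⟩ :=
    IsCompact.tendsto_subseq (isCompact_univ (X := X)) (fun t => Set.mem_univ (y t))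
  have ha1 : dist a x ≤ ε' := by
    have htd : Tendsto (fun t => dist (y (φ t)) x) atTop (𝓝 (dist a x)) :=
      hconv.dist tendsto_const_nhds
    exact le_of_tendsto htd (Filter.Eventually.of_forall fun t => hy1 (φ t))
  have ha2 : ∀ n : ℕ, N ≤ n → dist ((e ^ (n : ℤ)) a) ((e ^ (n : ℤ)) q) ≤ ε' := by
    intro n hn
    have htd : Tendsto (fun t => dist ((e ^ (n : ℤ)) (y (φ t))) ((e ^ (n : ℤ)) q))
        atTop (𝓝 (dist ((e ^ (n : ℤ)) a) ((e ^ (n : ℤ)) q))) :=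
      (((cont_pow' f n).tendsto a).comp hconv).dist tendsto_const_nhds
    refine le_of_tendsto htd ?_
    filter_upwards [eventually_ge_atTop n] with t ht
    refine hy2 (φ t) (n : ℤ) (by exact_mod_cast hn) ?_
    have : n ≤ N + φ t := le_trans (le_trans ht hφ.le_apply) (Nat.le_add_left _ _)
    exact_mod_cast this
  -- the shifted point is in the local stable set
  set L : ℕ := k * N with hL
  have hLN : N ≤ L := Nat.le_mul_of_pos_left N hk1
  have hLq : (e ^ (L : ℤ)) q = q := by
    have := periodic_mul' e q k hkq N
    rwa [Nat.mul_comm N k] at this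
  set z : X := (e ^ (L : ℤ)) a with hz
  have hzq : ∀ n : ℕ, dist ((e ^ (n : ℤ)) z) ((e ^ (n : ℤ)) q)
      = dist ((e ^ ((n + L : ℕ) : ℤ)) a) ((e ^ ((n + L : ℕ) : ℤ)) q) := by
    intro n
    rw [pow_add_apply' e n L a, pow_add_apply' e n L q, hLq]
  have hzloc : ∀ n : ℕ, dist ((e ^ (n : ℤ)) z) ((e ^ (n : ℤ)) q) ≤ ε₁ := by
    intro n
    rw [hzq n]
    have := ha2 (n + L) (le_trans hLN (Nat.le_add_left _ _))
    refine le_trans this ?_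
    rw [hε'def]
    have : min r ε₁ ≤ ε₁ := min_le_right _ _
    linarith
  have hz0 : Tendsto (fun n : ℕ => dist ((e ^ (n : ℤ)) z) ((e ^ (n : ℤ)) q))
      atTop (nhds 0) := hstab z hzloc
  -- conclude a is in the stable set
  have ha0 : Tendsto (fun n : ℕ => dist ((e ^ (n : ℤ)) a) ((e ^ (n : ℤ)) q))
      atTop (nhds 0) := by
    rw [← tendsto_add_atTop_iff_nat L]
    have heq : (fun n : ℕ => dist ((e ^ ((n + L : ℕ) : ℤ)) a) ((e ^ ((n + L : ℕ) : ℤ)) q))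
        = fun n : ℕ => dist ((e ^ (n : ℤ)) z) ((e ^ (n : ℤ)) q) := by
      funext n; rw [hzq n]
    exact heq ▸ hz0
  refine ⟨a, ?_, ha0⟩
  rw [Metric.mem_ball]
  have : min r ε₁ ≤ r := min_le_left _ _
  calc dist a x ≤ ε' := ha1
    _ < r := by rw [hε'def]; linarith
end
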